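/- arXiv:1303.4177 — 2 statements merged into one kernel-verified Lean document; each statement's English description precedes it below -/
import Mathlib

section
/- With parameters p = ⌈m / (log₂ m)²⌉ and s = ⌊log₂ m − 3·log₂ log₂ m⌋, the expression n·2^s/s + S/(2s) + m·p + ⌈m/p⌉ · 2^s · ⌈n/s⌉ is at most S/(2·log₂ m) + o((m+n)²/log m) as m, n → ∞ with S ≤ m·n·(2 log₂ m + 1). Concretely: for all ε > 0 there exists N such that for all m ≥ N and all n, S with S ≤ (m+n)², the expression is ≤ S/(2 log₂ m)·(1+ε) + ε·(m+n)²/log₂ m. -/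
open Real

set_option maxHeartbeats 1000000

lemma logb_le_3_sqrt {x : ℝ} (hx : 1 ≤ x) : Real.logb 2 x ≤ 3 * Real.sqrt x := by
  have hx0 : (0:ℝ) < x := by linarith
  have hs0 : (0:ℝ) < Real.sqrt x := Real.sqrt_pos.2 hx0
  have hlog : Real.log x ≤ 2 * Real.sqrt x := by
    have h1 : Real.log (Real.sqrt x) ≤ Real.sqrt x - 1 := Real.log_le_sub_one_of_pos hs0
    have h2 : Real.log (Real.sqrt x) = Real.log x / 2 := Real.log_sqrt hx0.le
    linarith
  have h2 : (2:ℝ)/3 ≤ Real.log 2 := by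
    have := Real.log_two_gt_d9
    linarith
  rw [Real.logb, div_le_iff₀ (Real.log_pos one_lt_two)]
  nlinarith only [hs0.le, hlog, h2]

lemma key (ε : ℝ) (hε : 0 < ε) (hε1 : ε ≤ 1) : ∃ N : ℕ, ∀ m : ℕ, N ≤ m → ∀ n : ℕ, 1 ≤ n → ∀ S : ℝ,
      0 ≤ S → S ≤ ((m : ℝ) + n) ^ 2 →
      (let p : ℕ := ⌈(m : ℝ) / (Real.logb 2 m) ^ 2⌉₊
       let s : ℕ := ⌊Real.logb 2 m - 3 * Real.logb 2 (Real.logb 2 m)⌋₊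
       (n : ℝ) * 2 ^ s / s + S / (2 * s) + (m : ℝ) * p
         + (⌈(m : ℝ) / p⌉₊ : ℝ) * 2 ^ s * (⌈(n : ℝ) / s⌉₊ : ℝ)) ≤
      S / (2 * Real.logb 2 m) * (1 + ε) + ε * ((m : ℝ) + n) ^ 2 / Real.logb 2 m := by
  refine ⟨2 ^ (⌈400/ε^2⌉₊ + 9), ?_⟩
  intro m hm n hn S hS0 hST
  set K : ℕ := ⌈400/ε^2⌉₊ + 9 with hKdef
  have hε2 : (0:ℝ) < ε^2 := by positivity
  have hKε : 400/ε^2 ≤ (K:ℝ) := by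
    calc 400/ε^2 ≤ (⌈400/ε^2⌉₊ : ℝ) := Nat.le_ceil _
    _ ≤ (K:ℝ) := by rw [hKdef]; push_cast; linarith
  have hmK : ((2:ℝ))^K ≤ (m:ℝ) := by exact_mod_cast Nat.cast_le.mpr hm
  have hm1 : (1:ℝ) ≤ (m:ℝ) := by
    have : (1:ℕ) ≤ m := le_trans Nat.one_le_two_pow hm
    exact_mod_cast this
  have hm_pos : (0:ℝ) < m := by linarith
  have hn1 : (1:ℝ) ≤ (n:ℝ) := by exact_mod_cast hn
  have hn0 : (0:ℝ) ≤ (n:ℝ) := by linarith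
  set L : ℝ := Real.logb 2 (m:ℝ) with hLdef
  have hLK : (K:ℝ) ≤ L := by
    have h1 : Real.logb 2 ((2:ℝ)^K) ≤ L :=
      Real.logb_le_logb_of_le one_lt_two (by positivity) hmK
    have h2 : Real.logb 2 ((2:ℝ)^K) = (K:ℝ) := by
      rw [← Real.rpow_natCast 2 K, Real.logb_rpow (by norm_num) (by norm_num)]
    linarith
  have hL400' : 400/ε^2 ≤ L := le_trans hKε hLK
  have hεsq1 : ε^2 ≤ 1 := by nlinarith only [hε, hε1]
  have hL400 : 400 ≤ L := by
    have : (400:ℝ) ≤ 400/ε^2 := by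
      rw [le_div_iff₀ hε2]; nlinarith only [hεsq1]
    linarith
  have hL0 : (0:ℝ) < L := by linarith
  have hL1 : (1:ℝ) ≤ L := by linarith
  have hsqL : Real.sqrt L * Real.sqrt L = L := Real.mul_self_sqrt hL0.le
  have hsqL0 : (0:ℝ) ≤ Real.sqrt L := Real.sqrt_nonneg L
  have hsqLε : 20/ε ≤ Real.sqrt L := by
    rw [Real.le_sqrt (by positivity) hL0.le]
    calc (20/ε)^2 = 400/ε^2 := by ring
    _ ≤ L := hL400'
  have hsq20 : (20:ℝ) ≤ Real.sqrt L := by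
    have h1 : (20:ℝ) ≤ 20/ε := by
      rw [le_div_iff₀ hε]; nlinarith only [hε1, hε]
    linarith
  have hεsq : (20:ℝ) ≤ ε * Real.sqrt L := by
    rw [div_le_iff₀ hε] at hsqLε
    rw [mul_comm]
    exact hsqLε
  -- m is large
  have hm400 : 400/ε^2 ≤ (m:ℝ) := by
    have h1 : (K:ℝ) < ((2:ℕ)^K : ℕ) := by exact_mod_cast Nat.lt_two_pow_self (n := K)
    have h2 : (((2:ℕ)^K : ℕ) : ℝ) ≤ (m:ℝ) := by exact_mod_cast hm
    linarith
  have hsqm : 18/ε ≤ Real.sqrt m := by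
    rw [Real.le_sqrt (by positivity) hm_pos.le]
    calc (18/ε)^2 = 324/ε^2 := by ring
    _ ≤ 400/ε^2 := by gcongr <;> norm_num
    _ ≤ (m:ℝ) := hm400
  have hsqm' : Real.sqrt m * Real.sqrt m = m := Real.mul_self_sqrt hm_pos.le
  have hsqm0 : (0:ℝ) ≤ Real.sqrt m := Real.sqrt_nonneg m
  have hLm : L ≤ 3 * Real.sqrt m := logb_le_3_sqrt hm1
  have hεm : 6 * L ≤ ε * (m:ℝ) := by
    rw [div_le_iff₀ hε] at hsqm
    have e1 : 18 * Real.sqrt m ≤ Real.sqrt m * ε * Real.sqrt m :=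
      mul_le_mul_of_nonneg_right hsqm hsqm0
    have e2 : ε * (Real.sqrt m * Real.sqrt m) = ε * m := by rw [hsqm']
    nlinarith only [e1, e2, hLm, hsqm0]
  have hlogL : Real.logb 2 L ≤ 3 * Real.sqrt L := logb_le_3_sqrt hL1
  set x : ℝ := L - 3 * Real.logb 2 L with hxdef
  have h20L : 20 * Real.sqrt L ≤ L := by nlinarith only [hsq20, hsqL0, hsqL]
  have hx_half : L/2 + 1 ≤ x := by
    rw [hxdef]
    linarith only [hlogL, h20L, hsq20]
  have hx0 : (0:ℝ) ≤ x := by linarith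
  -- enter the lets
  dsimp only
  set s : ℕ := ⌊x⌋₊ with hsdef
  set p : ℕ := ⌈(m : ℝ) / L ^ 2⌉₊ with hpdef
  have hs_le : (s:ℝ) ≤ x := Nat.floor_le hx0
  have hs_gt : x - 1 < (s:ℝ) := Nat.sub_one_lt_floor x
  have hs_half : L/2 ≤ (s:ℝ) := by linarith
  have hs1 : (1:ℝ) ≤ (s:ℝ) := by linarith
  have hs0 : (0:ℝ) < (s:ℝ) := by linarith
  -- the key ratio bound : L ≤ (1+ε) s
  have hA : L ≤ (1+ε) * (s:ℝ) := by
    have h1 : L - 9*Real.sqrt L - 1 ≤ (s:ℝ) := by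
      have hx9 : L - 9*Real.sqrt L ≤ x := by
        rw [hxdef]; linarith only [hlogL]
      linarith
    have h2 : (1+ε) * (L - 9*Real.sqrt L - 1) ≤ (1+ε) * (s:ℝ) :=
      mul_le_mul_of_nonneg_left h1 (by positivity)
    have hεL20 : 20 * Real.sqrt L ≤ ε * L := by
      have e1 : 20 * Real.sqrt L ≤ ε * Real.sqrt L * Real.sqrt L :=
        mul_le_mul_of_nonneg_right hεsq hsqL0
      have e2 : ε * (Real.sqrt L * Real.sqrt L) = ε * L := by rw [hsqL]
      nlinarith only [e1, e2]
    have hεsqL : ε * Real.sqrt L ≤ Real.sqrt L := by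
      nlinarith only [hε1, hsqL0]
    have h3 : L ≤ (1+ε) * (L - 9*Real.sqrt L - 1) := by
      nlinarith only [hεL20, hεsqL, hsq20, hε1]
    linarith
  -- bound on 2^s
  have h2s : (2:ℝ)^s ≤ (m:ℝ)/L^3 := by
    have h2x : (2:ℝ) ^ ((s:ℕ):ℝ) ≤ (2:ℝ) ^ x :=
      Real.rpow_le_rpow_of_exponent_le one_le_two hs_le
    have h1 : (2:ℝ) ^ (L : ℝ) = (m:ℝ) := Real.rpow_logb two_pos (by norm_num) hm_pos
    have h2 : (2:ℝ) ^ (Real.logb 2 L) = L := Real.rpow_logb two_pos (by norm_num) hL0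
    have h3 : (2:ℝ) ^ (3 * Real.logb 2 L) = L ^ (3:ℕ) := by
      rw [mul_comm, Real.rpow_mul (by norm_num : (0:ℝ) ≤ 2), h2,
        show (3:ℝ) = ((3:ℕ):ℝ) by norm_num, Real.rpow_natCast]
    have hid : (2:ℝ) ^ x = (m:ℝ) / L ^ 3 := by
      rw [hxdef, Real.rpow_sub two_pos, h1, h3]
    calc (2:ℝ)^s = (2:ℝ) ^ ((s:ℕ):ℝ) := (Real.rpow_natCast 2 s).symm
    _ ≤ (2:ℝ) ^ x := h2x
    _ = (m:ℝ)/L^3 := hid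
  have h2s0 : (0:ℝ) ≤ (2:ℝ)^s := by positivity
  -- p facts
  have hL2 : (0:ℝ) < L^2 := by positivity
  have hp_pos : 0 < p := Nat.ceil_pos.2 (by positivity)
  have hp_pos' : (0:ℝ) < (p:ℝ) := by exact_mod_cast hp_pos
  have hp_ge : (m:ℝ)/L^2 ≤ (p:ℝ) := Nat.le_ceil _
  have hp_lt : (p:ℝ) < (m:ℝ)/L^2 + 1 := Nat.ceil_lt_add_one (by positivity)
  have hp_ge' : (m:ℝ) ≤ (p:ℝ) * L^2 := by
    rw [div_le_iff₀ hL2] at hp_ge; linarith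
  have hmp_le : (m:ℝ)/(p:ℝ) ≤ L^2 := by
    rw [div_le_iff₀ hp_pos']; linarith only [hp_ge']
  have hceil_mp : (⌈(m:ℝ)/(p:ℝ)⌉₊:ℝ) ≤ 2*L^2 := by
    have h1 : (⌈(m:ℝ)/(p:ℝ)⌉₊:ℝ) < (m:ℝ)/(p:ℝ) + 1 := Nat.ceil_lt_add_one (by positivity)
    nlinarith only [h1, hmp_le, hL1]
  have hns_le : (n:ℝ)/(s:ℝ) ≤ 2*(n:ℝ)/L := by
    rw [div_le_div_iff₀ hs0 hL0]
    nlinarith only [mul_le_mul_of_nonneg_left hs_half hn0]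
  have hceil_ns : (⌈(n:ℝ)/(s:ℝ)⌉₊:ℝ) ≤ 2*(n:ℝ)/L + 1 := by
    have h1 : (⌈(n:ℝ)/(s:ℝ)⌉₊:ℝ) < (n:ℝ)/(s:ℝ) + 1 := Nat.ceil_lt_add_one (by positivity)
    linarith
  -- global quantities
  set T : ℝ := ((m:ℝ) + n)^2 with hTdef
  have hT0 : (0:ℝ) ≤ T := by positivity
  have hmnT : (m:ℝ)*(n:ℝ) ≤ T := by
    rw [hTdef]; nlinarith only [hn0, hm_pos.le]
  have hm2T : (m:ℝ)^2 ≤ T := by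
    rw [hTdef]; nlinarith only [hn0, hm_pos.le]
  -- term 1
  have ht1 : (n:ℝ) * 2^s / (s:ℝ) ≤ T/L^3 := by
    calc (n:ℝ) * 2^s / (s:ℝ) ≤ (n:ℝ) * 2^s := div_le_self (by positivity) hs1
    _ ≤ (n:ℝ) * ((m:ℝ)/L^3) := mul_le_mul_of_nonneg_left h2s hn0
    _ = (n:ℝ)*(m:ℝ)/L^3 := by ring
    _ ≤ T/L^3 := by
      apply (div_le_div_iff_of_pos_right (by positivity)).mpr
      linarith only [hmnT]
  -- term 2
  have ht2 : S / (2*(s:ℝ)) ≤ S/(2*L)*(1+ε) := by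
    have h1 : S / (2*(s:ℝ)) ≤ S*(1+ε)/(2*L) := by
      rw [div_le_div_iff₀ (by positivity) (by positivity)]
      nlinarith only [mul_le_mul_of_nonneg_left hA hS0]
    have h2 : S*(1+ε)/(2*L) = S/(2*L)*(1+ε) := by ring
    linarith
  -- term 3
  have ht3 : (m:ℝ) * (p:ℝ) ≤ T/L^2 + (m:ℝ) := by
    have h1 : (m:ℝ) * (p:ℝ) ≤ (m:ℝ) * ((m:ℝ)/L^2 + 1) :=
      mul_le_mul_of_nonneg_left hp_lt.le (by positivity)
    have h2 : (m:ℝ) * ((m:ℝ)/L^2 + 1) = (m:ℝ)^2/L^2 + (m:ℝ) := by ring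
    have h3 : (m:ℝ)^2/L^2 ≤ T/L^2 :=
      (div_le_div_iff_of_pos_right (by positivity)).mpr hm2T
    linarith
  -- term 4
  have ht4 : (⌈(m:ℝ)/(p:ℝ)⌉₊:ℝ) * 2^s * (⌈(n:ℝ)/(s:ℝ)⌉₊:ℝ) ≤ 4*T/L^2 + 2*(m:ℝ) := by
    have f1 : (⌈(m:ℝ)/(p:ℝ)⌉₊:ℝ) * 2^s ≤ (2*L^2) * ((m:ℝ)/L^3) :=
      mul_le_mul hceil_mp h2s h2s0 (by positivity)
    have f2 : (⌈(m:ℝ)/(p:ℝ)⌉₊:ℝ) * 2^s * (⌈(n:ℝ)/(s:ℝ)⌉₊:ℝ)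
        ≤ (2*L^2) * ((m:ℝ)/L^3) * (2*(n:ℝ)/L + 1) :=
      mul_le_mul f1 hceil_ns (Nat.cast_nonneg _) (by positivity)
    have f3 : (2*L^2) * ((m:ℝ)/L^3) * (2*(n:ℝ)/L + 1) = 4*((m:ℝ)*(n:ℝ))/L^2 + 2*(m:ℝ)/L := by
      field_simp
      ring
    have f4 : 4*((m:ℝ)*(n:ℝ))/L^2 ≤ 4*T/L^2 := by
      apply (div_le_div_iff_of_pos_right (by positivity)).mpr
      linarith only [hmnT]
    have f5 : 2*(m:ℝ)/L ≤ 2*(m:ℝ) := div_le_self (by positivity) hL1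
    linarith [f2, f3.le, f3.ge]
  -- the small terms sum
  have hεL : (12:ℝ) ≤ ε * L := by
    rw [div_le_iff₀ hε2] at hL400'
    nlinarith only [hL400', mul_nonneg (mul_nonneg hε.le hL0.le) (sub_nonneg.2 hε1)]
  have hsmall1 : T/L^3 ≤ T/L^2 := by
    apply div_le_div_of_nonneg_left hT0 (by positivity)
    nlinarith only [hL1, sq_nonneg L, hL0.le]
  have hsmall2 : 12*T/L^2 ≤ ε*T/L := by
    rw [div_le_div_iff₀ (by positivity) (by positivity)]
    nlinarith only [mul_nonneg (mul_nonneg hT0 hL0.le) (sub_nonneg.2 hεL)]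
  have hsmall3 : 6*(m:ℝ) ≤ ε*T/L := by
    rw [le_div_iff₀ (by positivity)]
    nlinarith only [mul_le_mul_of_nonneg_right hεm hm_pos.le,
      mul_le_mul_of_nonneg_left hm2T hε.le]
  have hfinal : T/L^3 + (T/L^2 + (m:ℝ)) + (4*T/L^2 + 2*(m:ℝ)) ≤ ε*T/L := by
    have e1 : (4:ℝ)*T/L^2 = 4*(T/L^2) := mul_div_assoc 4 T (L^2)
    have e2 : (12:ℝ)*T/L^2 = 12*(T/L^2) := mul_div_assoc 12 T (L^2)
    linarith only [hsmall1, hsmall2, hsmall3, e1, e2]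
  linarith only [ht1, ht2, ht3, ht4, hfinal]

/-- The parameter-balancing estimate: with `p = ⌈m/(log₂ m)²⌉` and
`s = ⌊log₂ m − 3 log₂ log₂ m⌋`, the expression
`n·2^s/s + S/(2s) + m·p + ⌈m/p⌉·2^s·⌈n/s⌉` is `S/(2 log₂ m) + o((m+n)²/log m)`. -/
theorem stmt_12 :
    ∀ ε : ℝ, 0 < ε → ∃ N : ℕ, ∀ m : ℕ, N ≤ m → ∀ n : ℕ, 1 ≤ n → ∀ S : ℝ,
      0 ≤ S → S ≤ ((m : ℝ) + n) ^ 2 →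
      (let p : ℕ := ⌈(m : ℝ) / (Real.logb 2 m) ^ 2⌉₊
       let s : ℕ := ⌊Real.logb 2 m - 3 * Real.logb 2 (Real.logb 2 m)⌋₊
       (n : ℝ) * 2 ^ s / s + S / (2 * s) + (m : ℝ) * p
         + (⌈(m : ℝ) / p⌉₊ : ℝ) * 2 ^ s * (⌈(n : ℝ) / s⌉₊ : ℝ)) ≤
      S / (2 * Real.logb 2 m) * (1 + ε) + ε * ((m : ℝ) + n) ^ 2 / Real.logb 2 m := by
  intro ε hε
  obtain ⟨N, hN⟩ := key (min ε 1) (lt_min hε one_pos) (min_le_right _ _)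
  refine ⟨N + 2, ?_⟩
  intro m hm n hn S hS0 hST
  have h := hN m (by omega) n hn S hS0 hST
  refine h.trans ?_
  have hm2 : (2:ℝ) ≤ (m:ℝ) := by exact_mod_cast (by omega : 2 ≤ m)
  have hL1 : (1:ℝ) ≤ Real.logb 2 (m:ℝ) := by
    have h1 : Real.logb 2 (2:ℝ) ≤ Real.logb 2 (m:ℝ) :=
      Real.logb_le_logb_of_le one_lt_two two_pos hm2
    simpa using h1
  have hL0 : (0:ℝ) < Real.logb 2 (m:ℝ) := by linarith
  have hmin : min ε 1 ≤ ε := min_le_left _ _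
  have hT0 : (0:ℝ) ≤ ((m:ℝ)+n)^2 := by positivity
  have h1 : S / (2 * Real.logb 2 m) * (1 + min ε 1) ≤ S / (2 * Real.logb 2 m) * (1 + ε) :=
    mul_le_mul_of_nonneg_left (by linarith) (by positivity)
  have h2 : min ε 1 * ((m:ℝ)+n)^2 / Real.logb 2 m ≤ ε * ((m:ℝ)+n)^2 / Real.logb 2 m :=
    (div_le_div_iff_of_pos_right hL0).mpr (mul_le_mul_of_nonneg_right hmin hT0)
  linarith
end

section
/- In the pairing scheme: if within a p-row section each column's ones are paired greedily, then the number of sums y_{i,j} that are nonempty is at most min(w/2, p(p−1)/2) where w is the weight of the section, and each y_{i,j} is computable with (number of columns pairing i with j) − 1 XOR gates; summing over all pairs, the total gate count for all y_{i,j} in the section is at most w/2. -/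
/-- `kPair P e` : the number of columns in which `e` is one of the chosen pairs. -/
def kPair (p q : ℕ) (P : Fin q → Finset (Finset (Fin p))) (e : Finset (Fin p)) : ℕ :=
  (Finset.univ.filter (fun c : Fin q => e ∈ P c)).card

theorem stmt_15 (p q : ℕ) (B : Fin p → Fin q → Bool)
    (P : Fin q → Finset (Finset (Fin p)))
    (hpair : ∀ (c : Fin q), ∀ e ∈ P c,
      e.card = 2 ∧ e ⊆ Finset.univ.filter (fun i : Fin p => B i c = true))
    (hdisj : ∀ c : Fin q, ((P c : Set (Finset (Fin p)))).PairwiseDisjoint id) :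
    -- the number of nonempty sums y_{i,j} is at most min(w/2, p(p-1)/2):
    (Finset.univ.filter (fun e : Finset (Fin p) => 1 ≤ kPair p q P e)).card ≤
      min ((Finset.univ.filter (fun u : Fin p × Fin q => B u.1 u.2 = true)).card / 2)
        (p * (p - 1) / 2) ∧
    -- gates for the y's plus the additions of the y's into rows are at most Σ k_{i,j}:
    (∑ e : Finset (Fin p), max (kPair p q P e - 1) 0) +
      (Finset.univ.filter (fun e : Finset (Fin p) => 1 ≤ kPair p q P e)).card ≤
      ∑ e : Finset (Fin p), kPair p q P e ∧
    -- and twice the number of pairings is at most the weight of the section: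
    2 * (∑ e : Finset (Fin p), kPair p q P e) ≤
      (Finset.univ.filter (fun u : Fin p × Fin q => B u.1 u.2 = true)).card := by
  set w := (Finset.univ.filter (fun u : Fin p × Fin q => B u.1 u.2 = true)).card with hw
  -- weight as a sum over columns
  have hwsum : w = ∑ c : Fin q, (Finset.univ.filter (fun i : Fin p => B i c = true)).card := by
    rw [hw, Finset.card_filter]
    rw [Fintype.sum_prod_type]
    rw [Finset.sum_comm]
    exact Finset.sum_congr rfl (fun c _ => (Finset.card_filter _ _).symm)
  -- sum of kPair as sum over columns of |P c|
  have hksum : (∑ e : Finset (Fin p), kPair p q P e) = ∑ c : Fin q, (P c).card := by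
    unfold kPair
    simp only [Finset.card_filter]
    rw [Finset.sum_comm]
    congr 1
    ext c
    rw [← Finset.card_filter]
    congr 1
    ext e
    simp
  -- part 3
  have h3 : 2 * (∑ e : Finset (Fin p), kPair p q P e) ≤ w := by
    rw [hksum, hwsum, Finset.mul_sum]
    apply Finset.sum_le_sum
    intro c _
    have hdisj' : ∀ x ∈ P c, ∀ y ∈ P c, x ≠ y → Disjoint (id x) (id y) := by
      intro x hx y hy hxy
      exact hdisj c hx hy hxy
    have hcard : ((P c).biUnion id).card = ∑ e ∈ P c, e.card :=
      Finset.card_biUnion hdisj'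
    have hsum2 : ∑ e ∈ P c, e.card = 2 * (P c).card := by
      rw [Finset.sum_congr rfl (fun e he => (hpair c e he).1)]
      simp [mul_comm]
    have hsub : (P c).biUnion id ⊆ Finset.univ.filter (fun i : Fin p => B i c = true) := by
      intro i hi
      rcases Finset.mem_biUnion.mp hi with ⟨e, he, hie⟩
      exact (hpair c e he).2 hie
    calc 2 * (P c).card = ((P c).biUnion id).card := by rw [hcard, hsum2]
      _ ≤ _ := Finset.card_le_card hsub
  -- part 2
  have h2 : (∑ e : Finset (Fin p), max (kPair p q P e - 1) 0) +
      (Finset.univ.filter (fun e : Finset (Fin p) => 1 ≤ kPair p q P e)).card ≤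
      ∑ e : Finset (Fin p), kPair p q P e := by
    rw [Finset.card_filter, ← Finset.sum_add_distrib]
    apply Finset.sum_le_sum
    intro e _
    rcases Nat.eq_zero_or_pos (kPair p q P e) with h | h
    · simp [h]
    · have hm : max (kPair p q P e - 1) 0 = kPair p q P e - 1 := Nat.max_eq_left (Nat.zero_le _)
      have h1 : (1:ℕ) ≤ kPair p q P e := h
      rw [hm, if_pos h1]
      omega
  -- part 1
  have hcard_le_sum : (Finset.univ.filter (fun e : Finset (Fin p) => 1 ≤ kPair p q P e)).card ≤
      ∑ e : Finset (Fin p), kPair p q P e := by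
    rw [Finset.card_filter]
    rw [← Finset.sum_filter_add_sum_filter_not Finset.univ (fun e => 1 ≤ kPair p q P e)
      (fun e => kPair p q P e)]
    have : (∑ e ∈ Finset.univ.filter (fun e => 1 ≤ kPair p q P e), (1 : ℕ)) ≤
        ∑ e ∈ Finset.univ.filter (fun e => 1 ≤ kPair p q P e), kPair p q P e := by
      apply Finset.sum_le_sum
      intro e he
      exact (Finset.mem_filter.mp he).2
    calc (∑ e : Finset (Fin p), if 1 ≤ kPair p q P e then 1 else 0)
        = ∑ e ∈ Finset.univ.filter (fun e => 1 ≤ kPair p q P e), (1 : ℕ) := by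
          rw [← Finset.sum_filter]
      _ ≤ _ := le_trans this (Nat.le_add_right _ _)
  have h1a : (Finset.univ.filter (fun e : Finset (Fin p) => 1 ≤ kPair p q P e)).card ≤ w / 2 := by
    apply le_trans hcard_le_sum
    omega
  have h1b : (Finset.univ.filter (fun e : Finset (Fin p) => 1 ≤ kPair p q P e)).card ≤
      p * (p - 1) / 2 := by
    have hsub : (Finset.univ.filter (fun e : Finset (Fin p) => 1 ≤ kPair p q P e)) ⊆
        Finset.powersetCard 2 (Finset.univ : Finset (Fin p)) := by
      intro e he
      have h1 := (Finset.mem_filter.mp he).2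
      have : ∃ c, e ∈ P c := by
        have := Nat.lt_of_lt_of_le Nat.zero_lt_one h1
        rw [kPair, Finset.card_pos] at this
        obtain ⟨c, hc⟩ := this
        exact ⟨c, (Finset.mem_filter.mp hc).2⟩
      obtain ⟨c, hc⟩ := this
      rw [Finset.mem_powersetCard]
      exact ⟨Finset.subset_univ _, (hpair c e hc).1⟩
    calc _ ≤ (Finset.powersetCard 2 (Finset.univ : Finset (Fin p))).card :=
        Finset.card_le_card hsub
      _ = p.choose 2 := by rw [Finset.card_powersetCard]; simp
      _ = p * (p - 1) / 2 := Nat.choose_two_right p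
  exact ⟨le_min h1a h1b, h2, h3⟩
end
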